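/- Conversely, let C be a conjunction of linear inequalities with matrix M and vector v as above, and let G_1,…,G_s be the connected components of the dependency graph of C. If z ∈ ℕ^n satisfies M z ≤ v, then the substitution φ_z mapping α_i to s^{z_i} β_{c_i}, where c_i is the index of the component containing α_i and β_1,…,β_s are fresh distinct variables, is a linear solution of C. Moreover, if z ≤ z' componentwise, then φ_z ≤_A φ_{z'} pointwise on the variables of C. -/
import Mathlib


/-- Size expressions of the size algebra A: a ::= α | s a | ∞. -/
inductive SExpr : Type
  | var : ℕ → SExpr
  | s : SExpr → SExpr
  | infty : SExpr
deriving DecidableEq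

/-- The quasi-ordering ≤_A on size expressions. -/
inductive SLe : SExpr → SExpr → Prop
  | refl (a) : SLe a a
  | trans {a b c} : SLe a b → SLe b c → SLe a c
  | mon {a b} : SLe a b → SLe (.s a) (.s b)
  | succ {a b} : SLe a b → SLe a (.s b)
  | infty (a) : SLe a .infty

/-- Normal form w.r.t. the rewrite rule s∞ → ∞. -/
def nf : SExpr → SExpr
  | .var α => .var α
  | .infty => .infty
  | .s a =>
    match nf a with
    | .infty => .infty
    | b => .s b

/-- Action of a size substitution on size expressions. -/
def subst (φ : ℕ → SExpr) : SExpr → SExpr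
  | .var α => φ α
  | .s a => .s (subst φ a)
  | .infty => .infty

lemma SLe_iter_le {a b : ℕ} (h : a ≤ b) (x : SExpr) :
    SLe (SExpr.s^[a] x) (SExpr.s^[b] x) := by
  induction b with
  | zero => simpa [Nat.le_zero.mp h] using SLe.refl x
  | succ b ih =>
    rcases Nat.lt_or_ge a (b+1) with h' | h'
    · have := ih (Nat.lt_succ_iff.mp h')
      rw [Function.iterate_succ_apply']
      exact SLe.succ this
    · have : a = b + 1 := le_antisymm h h'
      subst this; exact SLe.refl _

/-- Conversely, from a nonnegative integer vector z with M z ≤ v one gets a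
linear solution φ_z mapping α_l to s^{z l} β_{c l}, where the base variables β
are constant exactly on the connected components of the dependency graph;
moreover φ_z is monotone in z. -/
theorem vector_to_linear_solution {K n : ℕ}
    (j k : Fin K → Fin n) (p q : Fin K → ℕ)
    (hjk : ∀ i, j i ≠ k i)
    (M : Matrix (Fin K) (Fin n) ℚ) (v : Fin K → ℚ)
    (hM : ∀ i l, M i l = if l = j i then 1 else if l = k i then -1 else 0)
    (hv : ∀ i, v i = (q i : ℚ) - (p i : ℚ))
    (z : Fin n → ℕ)
    (hz : ∀ i, M.mulVec (fun l => (z l : ℚ)) i ≤ v i)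
    (β : Fin n → ℕ)
    (hβ : ∀ l m, β l = β m ↔
      Relation.EqvGen (fun l m => ∃ i, j i = l ∧ k i = m) l m) :
    (∀ i, SLe (SExpr.s^[p i] (SExpr.s^[z (j i)] (.var (β (j i)))))
              (SExpr.s^[q i] (SExpr.s^[z (k i)] (.var (β (k i)))))) ∧
    (∀ z' : Fin n → ℕ, (∀ l, z l ≤ z' l) →
      ∀ l, SLe (SExpr.s^[z l] (.var (β l))) (SExpr.s^[z' l] (.var (β l)))) := by
  constructor
  · intro i
    have hβeq : β (j i) = β (k i) :=
      (hβ _ _).2 (Relation.EqvGen.rel _ _ ⟨i, rfl, rfl⟩)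
    have hsum : M.mulVec (fun l => (z l : ℚ)) i
        = (z (j i) : ℚ) - (z (k i) : ℚ) := by
      have hterm : ∀ l, M i l * (z l : ℚ)
          = (if j i = l then (z l : ℚ) else 0)
            + (if k i = l then -(z l : ℚ) else 0) := by
        intro l
        rw [hM]
        rcases eq_or_ne l (j i) with h1 | h1
        · subst h1; simp [Ne.symm (hjk i)]
        · rcases eq_or_ne l (k i) with h2 | h2
          · subst h2; simp [h1, Ne.symm h1]
          · simp [h1, h2, Ne.symm h1, Ne.symm h2]
      simp only [Matrix.mulVec, dotProduct, hterm, Finset.sum_add_distrib,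
        Finset.sum_ite_eq, Finset.mem_univ, if_true]
      ring
    have hle : (z (j i) : ℚ) - (z (k i) : ℚ) ≤ (q i : ℚ) - (p i : ℚ) := by
      have := hz i; rwa [hsum, hv] at this
    have hnat : p i + z (j i) ≤ q i + z (k i) := by
      have : ((p i + z (j i) : ℕ) : ℚ) ≤ ((q i + z (k i) : ℕ) : ℚ) := by
        push_cast; linarith
      exact_mod_cast this
    rw [hβeq, ← Function.iterate_add_apply, ← Function.iterate_add_apply]
    exact SLe_iter_le hnat _
  · intro z' hz' l
    exact SLe_iter_le (hz' l) _
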